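/- Let μ ∈ {−1,1}, let U ⊆ ℝ³ be open (coordinates indexed by 0,1,2, with ∂_m the partial derivative in the m-th coordinate), and let s, v, w : U → ℝ³ be C² maps satisfying at every point of U: s ·_μ s = μ, v ·_μ v = 1, v ·_μ s = 0, and w = s ×_μ v. Define ψ_m = v ·_μ ∂_m s + i w ·_μ ∂_m s : U → ℂ and A_m = w ·_μ ∂_m v : U → ℝ for m = 0,1,2. Then for all l, m ∈ {0,1,2} the curvature relation ∂_l A_m − ∂_m A_l = μ Im(ψ_l · conj(ψ_m)) holds on U. -/

import Mathlib

noncomputable section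

/-- The inner product `v ·_μ w = μ v₀ w₀ + v₁ w₁ + v₂ w₂` on `ℝ³`. -/
def mdot (μ : ℝ) (v w : Fin 3 → ℝ) : ℝ :=
  μ * v 0 * w 0 + v 1 * w 1 + v 2 * w 2

/-- The standard cross product on `ℝ³`. -/
def cross3 (v w : Fin 3 → ℝ) : Fin 3 → ℝ :=
  ![v 1 * w 2 - v 2 * w 1, v 2 * w 0 - v 0 * w 2, v 0 * w 1 - v 1 * w 0]

/-- The cross product `v ×_μ w = η_μ · (v × w)`, where `η_μ = diag(μ,1,1)`. -/
def mcross (μ : ℝ) (v w : Fin 3 → ℝ) : Fin 3 → ℝ :=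
  ![μ * cross3 v w 0, cross3 v w 1, cross3 v w 2]

/-- Partial derivative in the `m`-th coordinate of an `ℝ³`-valued map on `ℝ³`. -/
def pdV (m : Fin 3) (f : (Fin 3 → ℝ) → (Fin 3 → ℝ)) (x : Fin 3 → ℝ) : Fin 3 → ℝ :=
  fderiv ℝ f x (Pi.single m 1)

/-- Partial derivative in the `m`-th coordinate of a real-valued map on `ℝ³`. -/
def pdR (m : Fin 3) (f : (Fin 3 → ℝ) → ℝ) (x : Fin 3 → ℝ) : ℝ :=
  fderiv ℝ f x (Pi.single m 1)


lemma hasFDerivAt_proj {f : (Fin 3 → ℝ) → (Fin 3 → ℝ)} {x : Fin 3 → ℝ}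
    (hf : DifferentiableAt ℝ f x) (i : Fin 3) :
    HasFDerivAt (fun y => f y i)
      ((ContinuousLinearMap.proj (R := ℝ) (φ := fun _ : Fin 3 => ℝ) i).comp (fderiv ℝ f x)) x :=
  (ContinuousLinearMap.proj (R := ℝ) (φ := fun _ : Fin 3 => ℝ) i).hasFDerivAt.comp x
    hf.hasFDerivAt

lemma fderiv_comp_proj {f : (Fin 3 → ℝ) → (Fin 3 → ℝ)} {x : Fin 3 → ℝ}
    (hf : DifferentiableAt ℝ f x) (i : Fin 3) (u : Fin 3 → ℝ) :
    fderiv ℝ (fun y => f y i) x u = fderiv ℝ f x u i := by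
  rw [(hasFDerivAt_proj hf i).fderiv]; rfl

lemma pd_mdot (μ : ℝ) {f g : (Fin 3 → ℝ) → (Fin 3 → ℝ)} {x : Fin 3 → ℝ}
    (hf : DifferentiableAt ℝ f x) (hg : DifferentiableAt ℝ g x) (u : Fin 3 → ℝ) :
    fderiv ℝ (fun y => mdot μ (f y) (g y)) x u =
      mdot μ (fderiv ℝ f x u) (g x) + mdot μ (f x) (fderiv ℝ g x u) := by
  have Hf := fun i => hasFDerivAt_proj hf i
  have Hg := fun i => hasFDerivAt_proj hg i
  have H := ((((Hf 0).const_mul μ).mul (Hg 0)).add ((Hf 1).mul (Hg 1))).add ((Hf 2).mul (Hg 2))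
  have hd : DifferentiableAt ℝ (fun y => mdot μ (f y) (g y)) x := by
    simp only [mdot]; exact H.differentiableAt
  have hD := hd.hasFDerivAt.unique (by simp only [mdot]; exact H)
  rw [hD]
  simp only [mdot, ContinuousLinearMap.add_apply, ContinuousLinearMap.smul_apply,
    ContinuousLinearMap.coe_comp', Function.comp_apply, ContinuousLinearMap.proj_apply,
    smul_eq_mul]
  ring

lemma pd_crossterm (c : ℝ) {a b : (Fin 3 → ℝ) → (Fin 3 → ℝ)} {x : Fin 3 → ℝ}
    (ha : DifferentiableAt ℝ a x) (hb : DifferentiableAt ℝ b x) (j k : Fin 3) (u : Fin 3 → ℝ) :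
    fderiv ℝ (fun y => c * (a y j * b y k - a y k * b y j)) x u =
      c * (fderiv ℝ a x u j * b x k + a x j * fderiv ℝ b x u k
        - (fderiv ℝ a x u k * b x j + a x k * fderiv ℝ b x u j)) := by
  have Ha := fun i => hasFDerivAt_proj ha i
  have Hb := fun i => hasFDerivAt_proj hb i
  have H := ((((Ha j).mul (Hb k)).sub ((Ha k).mul (Hb j))).const_mul c)
  rw [(show HasFDerivAt (fun y => c * (a y j * b y k - a y k * b y j)) _ x from H).fderiv]
  simp only [ContinuousLinearMap.add_apply, ContinuousLinearMap.smul_apply,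
    ContinuousLinearMap.sub_apply, ContinuousLinearMap.coe_comp', Function.comp_apply,
    ContinuousLinearMap.proj_apply, smul_eq_mul]
  ring

theorem stmt5 (μ : ℝ) (hμ : μ = 1 ∨ μ = -1)
    (U : Set (Fin 3 → ℝ)) (hU : IsOpen U)
    (s v w : (Fin 3 → ℝ) → (Fin 3 → ℝ))
    (hs : ContDiffOn ℝ 2 s U) (hv : ContDiffOn ℝ 2 v U) (hw : ContDiffOn ℝ 2 w U)
    (h1 : ∀ x ∈ U, mdot μ (s x) (s x) = μ)
    (h2 : ∀ x ∈ U, mdot μ (v x) (v x) = 1)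
    (h3 : ∀ x ∈ U, mdot μ (v x) (s x) = 0)
    (h4 : ∀ x ∈ U, w x = mcross μ (s x) (v x))
    (ψ : Fin 3 → (Fin 3 → ℝ) → ℂ)
    (hψ : ∀ m x, ψ m x =
      (mdot μ (v x) (pdV m s x) : ℂ) + Complex.I * (mdot μ (w x) (pdV m s x) : ℂ))
    (A : Fin 3 → (Fin 3 → ℝ) → ℝ)
    (hA : ∀ m x, A m x = mdot μ (w x) (pdV m v x)) :
    ∀ l m : Fin 3, ∀ x ∈ U,
      pdR l (A m) x - pdR m (A l) x = μ * (ψ l x * (starRingEnd ℂ) (ψ m x)).im := by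
  intro l m x hx
  have hsd : DifferentiableAt ℝ s x :=
    (hs.contDiffAt (hU.mem_nhds hx)).differentiableAt (by norm_num)
  have hvd : DifferentiableAt ℝ v x :=
    (hv.contDiffAt (hU.mem_nhds hx)).differentiableAt (by norm_num)
  have hwd : DifferentiableAt ℝ w x :=
    (hw.contDiffAt (hU.mem_nhds hx)).differentiableAt (by norm_num)
  have hFd : DifferentiableAt ℝ (fderiv ℝ v) x :=
    ((hv.contDiffAt (hU.mem_nhds hx)).fderiv_right (m := 1) (by norm_num)).differentiableAt one_ne_zero
  have hg : ∀ m' : Fin 3, DifferentiableAt ℝ (fun y => fderiv ℝ v y (Pi.single m' 1)) x :=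
    fun m' => hFd.clm_apply (differentiableAt_const _)
  have hg2 : ∀ l' m' : Fin 3, fderiv ℝ (fun y => fderiv ℝ v y (Pi.single m' 1)) x (Pi.single l' 1)
      = fderiv ℝ (fderiv ℝ v) x (Pi.single l' 1) (Pi.single m' 1) := by
    intro l' m'
    rw [fderiv_clm_apply hFd (differentiableAt_const _)]
    simp
  have h5 : ∀ l' m' : Fin 3, pdR l' (A m') x =
      mdot μ (fderiv ℝ w x (Pi.single l' 1)) (fderiv ℝ v x (Pi.single m' 1))
      + mdot μ (w x) (fderiv ℝ (fderiv ℝ v) x (Pi.single l' 1) (Pi.single m' 1)) := by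
    intro l' m'
    have hAm : A m' = fun y => mdot μ (w y) (fderiv ℝ v y (Pi.single m' 1)) := by
      funext y; exact hA m' y
    rw [show pdR l' (A m') x = fderiv ℝ (A m') x (Pi.single l' 1) from rfl, hAm,
      pd_mdot μ hwd (hg m') (Pi.single l' 1), hg2 l' m']
  have hsymm : fderiv ℝ (fderiv ℝ v) x (Pi.single l 1) (Pi.single m 1)
      = fderiv ℝ (fderiv ℝ v) x (Pi.single m 1) (Pi.single l 1) := by
    have hev : ∀ᶠ y in nhds x, HasFDerivAt v (fderiv ℝ v y) y := by
      filter_upwards [hU.mem_nhds hx] with y hy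
      exact ((hv.differentiableOn two_ne_zero).differentiableAt (hU.mem_nhds hy)).hasFDerivAt
    exact second_derivative_symmetric_of_eventually hev hFd.hasFDerivAt _ _
  have hconst : ∀ (f g : (Fin 3 → ℝ) → (Fin 3 → ℝ)), DifferentiableAt ℝ f x →
      DifferentiableAt ℝ g x → ∀ (c : ℝ), (∀ y ∈ U, mdot μ (f y) (g y) = c) →
      ∀ r : Fin 3, mdot μ (fderiv ℝ f x (Pi.single r 1)) (g x)
        + mdot μ (f x) (fderiv ℝ g x (Pi.single r 1)) = 0 := by
    intro f g hf hg' c hc r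
    rw [← pd_mdot μ hf hg' (Pi.single r 1)]
    have heq : (fun y => mdot μ (f y) (g y)) =ᶠ[nhds x] (fun _ => c) :=
      Filter.eventuallyEq_of_mem (hU.mem_nhds hx) (fun y hy => hc y hy)
    rw [heq.fderiv_eq]
    simp
  have hc1l := hconst s s hsd hsd μ h1 l
  have hc1m := hconst s s hsd hsd μ h1 m
  have hc2l := hconst v v hvd hvd 1 h2 l
  have hc2m := hconst v v hvd hvd 1 h2 m
  have hc3l := hconst v s hvd hsd 0 h3 l
  have hc3m := hconst v s hvd hsd 0 h3 m
  have hc1x := h1 x hx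
  have hc2x := h2 x hx
  have hc3x := h3 x hx
  have hwcomp : ∀ (i j k : Fin 3) (c : ℝ),
      (∀ y ∈ U, w y i = c * (s y j * v y k - s y k * v y j)) →
      ∀ r : Fin 3, fderiv ℝ w x (Pi.single r 1) i =
        c * (fderiv ℝ s x (Pi.single r 1) j * v x k + s x j * fderiv ℝ v x (Pi.single r 1) k
          - (fderiv ℝ s x (Pi.single r 1) k * v x j + s x k * fderiv ℝ v x (Pi.single r 1) j)) := by
    intro i j k c hcomp r
    rw [← fderiv_comp_proj hwd i (Pi.single r 1)]
    have heq : (fun y => w y i) =ᶠ[nhds x] (fun y => c * (s y j * v y k - s y k * v y j)) :=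
      Filter.eventuallyEq_of_mem (hU.mem_nhds hx) (fun y hy => hcomp y hy)
    rw [heq.fderiv_eq, pd_crossterm c hsd hvd j k (Pi.single r 1)]
  have hW0 := hwcomp 0 1 2 μ (fun y hy => by
    rw [h4 y hy]; simp [mcross, cross3])
  have hW1 := hwcomp 1 2 0 1 (fun y hy => by
    rw [h4 y hy]; simp [mcross, cross3])
  have hW2 := hwcomp 2 0 1 1 (fun y hy => by
    rw [h4 y hy]; simp [mcross, cross3])
  have hpsi : (ψ l x * (starRingEnd ℂ) (ψ m x)).im =
      mdot μ (w x) (fderiv ℝ s x (Pi.single l 1)) * mdot μ (v x) (fderiv ℝ s x (Pi.single m 1))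
      - mdot μ (v x) (fderiv ℝ s x (Pi.single l 1))
        * mdot μ (w x) (fderiv ℝ s x (Pi.single m 1)) := by
    rw [hψ l x, hψ m x]
    simp only [pdV]
    simp [Complex.add_im, Complex.add_re, Complex.mul_im, Complex.mul_re,
      Complex.I_re, Complex.I_im, Complex.ofReal_re, Complex.ofReal_im, map_add, map_mul,
      Complex.conj_I, Complex.conj_ofReal]
    ring
  rw [h5 l m, h5 m l, hsymm, hpsi, h4 x hx]
  simp only [mdot, mcross, cross3, Matrix.cons_val_zero, Matrix.cons_val_one,
    Matrix.cons_val_two, Matrix.head_cons, Matrix.tail_cons] at hc1l hc1m hc2l hc2m hc3l hc3m hc1x hc2x hc3x ⊢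
  rw [hW0 l, hW0 m, hW1 l, hW1 m, hW2 l, hW2 m]
  rcases hμ with rfl | rfl
  · linear_combination
      (-1 : ℝ) * (fderiv ℝ s x (Pi.single l 1) 0 * (v x 1 * fderiv ℝ v x (Pi.single m 1) 2 - v x 2 * fderiv ℝ v x (Pi.single m 1) 1) - fderiv ℝ s x (Pi.single l 1) 1 * (v x 0 * fderiv ℝ v x (Pi.single m 1) 2 - v x 2 * fderiv ℝ v x (Pi.single m 1) 0) + fderiv ℝ s x (Pi.single l 1) 2 * (v x 0 * fderiv ℝ v x (Pi.single m 1) 1 - v x 1 * fderiv ℝ v x (Pi.single m 1) 0)) * hc1x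
      + (1 : ℝ) * (fderiv ℝ s x (Pi.single m 1) 0 * (v x 1 * fderiv ℝ v x (Pi.single l 1) 2 - v x 2 * fderiv ℝ v x (Pi.single l 1) 1) - fderiv ℝ s x (Pi.single m 1) 1 * (v x 0 * fderiv ℝ v x (Pi.single l 1) 2 - v x 2 * fderiv ℝ v x (Pi.single l 1) 0) + fderiv ℝ s x (Pi.single m 1) 2 * (v x 0 * fderiv ℝ v x (Pi.single l 1) 1 - v x 1 * fderiv ℝ v x (Pi.single l 1) 0)) * hc1x
      + (-2 : ℝ) * (s x 0 * (fderiv ℝ v x (Pi.single l 1) 1 * fderiv ℝ v x (Pi.single m 1) 2 - fderiv ℝ v x (Pi.single l 1) 2 * fderiv ℝ v x (Pi.single m 1) 1) - s x 1 * (fderiv ℝ v x (Pi.single l 1) 0 * fderiv ℝ v x (Pi.single m 1) 2 - fderiv ℝ v x (Pi.single l 1) 2 * fderiv ℝ v x (Pi.single m 1) 0) + s x 2 * (fderiv ℝ v x (Pi.single l 1) 0 * fderiv ℝ v x (Pi.single m 1) 1 - fderiv ℝ v x (Pi.single l 1) 1 * fderiv ℝ v x (Pi.single m 1) 0)) * 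hc2x
      + (-1 : ℝ) * (s x 0 * (fderiv ℝ s x (Pi.single l 1) 1 * fderiv ℝ v x (Pi.single m 1) 2 - fderiv ℝ s x (Pi.single l 1) 2 * fderiv ℝ v x (Pi.single m 1) 1) - s x 1 * (fderiv ℝ s x (Pi.single l 1) 0 * fderiv ℝ v x (Pi.single m 1) 2 - fderiv ℝ s x (Pi.single l 1) 2 * fderiv ℝ v x (Pi.single m 1) 0) + s x 2 * (fderiv ℝ s x (Pi.single l 1) 0 * fderiv ℝ v x (Pi.single m 1) 1 - fderiv ℝ s x (Pi.single l 1) 1 * fderiv ℝ v x (Pi.single m 1) 0)) * hc3x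
      + (1 : ℝ) * (s x 0 * (fderiv ℝ s x (Pi.single m 1) 1 * fderiv ℝ v x (Pi.single l 1) 2 - fderiv ℝ s x (Pi.single m 1) 2 * fderiv ℝ v x (Pi.single l 1) 1) - s x 1 * (fderiv ℝ s x (Pi.single m 1) 0 * fderiv ℝ v x (Pi.single l 1) 2 - fderiv ℝ s x (Pi.single m 1) 2 * fderiv ℝ v x (Pi.single l 1) 0) + s x 2 * (fderiv ℝ s x (Pi.single m 1) 0 * fderiv ℝ v x (Pi.single l 1) 1 - fderiv ℝ s x (Pi.single m 1) 1 * fderiv ℝ v x (Pi.single l 1) 0)) * hc3x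
      + (2 : ℝ) * (v x 0 * (fderiv ℝ v x (Pi.single l 1) 1 * fderiv ℝ v x (Pi.single m 1) 2 - fderiv ℝ v x (Pi.single l 1) 2 * fderiv ℝ v x (Pi.single m 1) 1) - v x 1 * (fderiv ℝ v x (Pi.single l 1) 0 * fderiv ℝ v x (Pi.single m 1) 2 - fderiv ℝ v x (Pi.single l 1) 2 * fderiv ℝ v x (Pi.single m 1) 0) + v x 2 * (fderiv ℝ v x (Pi.single l 1) 0 * fderiv ℝ v x (Pi.single m 1) 1 - fderiv ℝ v x (Pi.single l 1) 1 * fderiv ℝ v x (Pi.single m 1) 0)) * hc3x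
      + (1/2 : ℝ) * (s x 0 * (v x 1 * fderiv ℝ v x (Pi.single m 1) 2 - v x 2 * fderiv ℝ v x (Pi.single m 1) 1) - s x 1 * (v x 0 * fderiv ℝ v x (Pi.single m 1) 2 - v x 2 * fderiv ℝ v x (Pi.single m 1) 0) + s x 2 * (v x 0 * fderiv ℝ v x (Pi.single m 1) 1 - v x 1 * fderiv ℝ v x (Pi.single m 1) 0)) * hc1l
      + (-1/2 : ℝ) * (s x 0 * (v x 1 * fderiv ℝ v x (Pi.single l 1) 2 - v x 2 * fderiv ℝ v x (Pi.single l 1) 1) - s x 1 * (v x 0 * fderiv ℝ v x (Pi.single l 1) 2 - v x 2 * fderiv ℝ v x (Pi.single l 1) 0) + s x 2 * (v x 0 * fderiv ℝ v x (Pi.single l 1) 1 - v x 1 * fderiv ℝ v x (Pi.single l 1) 0)) * hc1m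
      + (-1 : ℝ) * (v x 0 * (s x 1 * fderiv ℝ v x (Pi.single m 1) 2 - s x 2 * fderiv ℝ v x (Pi.single m 1) 1) - v x 1 * (s x 0 * fderiv ℝ v x (Pi.single m 1) 2 - s x 2 * fderiv ℝ v x (Pi.single m 1) 0) + v x 2 * (s x 0 * fderiv ℝ v x (Pi.single m 1) 1 - s x 1 * fderiv ℝ v x (Pi.single m 1) 0)) * hc2l
      + (1 : ℝ) * (v x 0 * (s x 1 * fderiv ℝ v x (Pi.single l 1) 2 - s x 2 * fderiv ℝ v x (Pi.single l 1) 1) - v x 1 * (s x 0 * fderiv ℝ v x (Pi.single l 1) 2 - s x 2 * fderiv ℝ v x (Pi.single l 1) 0) + v x 2 * (s x 0 * fderiv ℝ v x (Pi.single l 1) 1 - s x 1 * fderiv ℝ v x (Pi.single l 1) 0)) * hc2m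
      + (-1 : ℝ) * (s x 0 * (fderiv ℝ s x (Pi.single m 1) 1 * v x 2 - fderiv ℝ s x (Pi.single m 1) 2 * v x 1) - s x 1 * (fderiv ℝ s x (Pi.single m 1) 0 * v x 2 - fderiv ℝ s x (Pi.single m 1) 2 * v x 0) + s x 2 * (fderiv ℝ s x (Pi.single m 1) 0 * v x 1 - fderiv ℝ s x (Pi.single m 1) 1 * v x 0)) * hc3l
      + (1 : ℝ) * (s x 0 * (fderiv ℝ s x (Pi.single l 1) 1 * v x 2 - fderiv ℝ s x (Pi.single l 1) 2 * v x 1) - s x 1 * (fderiv ℝ s x (Pi.single l 1) 0 * v x 2 - fderiv ℝ s x (Pi.single l 1) 2 * v x 0) + s x 2 * (fderiv ℝ s x (Pi.single l 1) 0 * v x 1 - fderiv ℝ s x (Pi.single l 1) 1 * v x 0)) * hc3m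
  · linear_combination
      (1 : ℝ) * (fderiv ℝ s x (Pi.single l 1) 0 * (v x 1 * fderiv ℝ v x (Pi.single m 1) 2 - v x 2 * fderiv ℝ v x (Pi.single m 1) 1) - fderiv ℝ s x (Pi.single l 1) 1 * (v x 0 * fderiv ℝ v x (Pi.single m 1) 2 - v x 2 * fderiv ℝ v x (Pi.single m 1) 0) + fderiv ℝ s x (Pi.single l 1) 2 * (v x 0 * fderiv ℝ v x (Pi.single m 1) 1 - v x 1 * fderiv ℝ v x (Pi.single m 1) 0)) * hc1x
      + (-1 : ℝ) * (fderiv ℝ s x (Pi.single m 1) 0 * (v x 1 * fderiv ℝ v x (Pi.single l 1) 2 - v x 2 * fderiv ℝ v x (Pi.single l 1) 1) - fderiv ℝ s x (Pi.single m 1) 1 * (v x 0 * fderiv ℝ v x (Pi.single l 1) 2 - v x 2 * fderiv ℝ v x (Pi.single l 1) 0) + fderiv ℝ s x (Pi.single m 1) 2 * (v x 0 * fderiv ℝ v x (Pi.single l 1) 1 - v x 1 * fderiv ℝ v x (Pi.single l 1) 0)) * hc1x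
      + (-2 : ℝ) * (s x 0 * (fderiv ℝ v x (Pi.single l 1) 1 * fderiv ℝ v x (Pi.single m 1) 2 - fderiv ℝ v x (Pi.single l 1) 2 * fderiv ℝ v x (Pi.single m 1) 1) - s x 1 * (fderiv ℝ v x (Pi.single l 1) 0 * fderiv ℝ v x (Pi.single m 1) 2 - fderiv ℝ v x (Pi.single l 1) 2 * fderiv ℝ v x (Pi.single m 1) 0) + s x 2 * (fderiv ℝ v x (Pi.single l 1) 0 * fderiv ℝ v x (Pi.single m 1) 1 - fderiv ℝ v x (Pi.single l 1) 1 * fderiv ℝ v x (Pi.single m 1) 0)) * hc2x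
      + (1 : ℝ) * (s x 0 * (fderiv ℝ s x (Pi.single l 1) 1 * fderiv ℝ v x (Pi.single m 1) 2 - fderiv ℝ s x (Pi.single l 1) 2 * fderiv ℝ v x (Pi.single m 1) 1) - s x 1 * (fderiv ℝ s x (Pi.single l 1) 0 * fderiv ℝ v x (Pi.single m 1) 2 - fderiv ℝ s x (Pi.single l 1) 2 * fderiv ℝ v x (Pi.single m 1) 0) + s x 2 * (fderiv ℝ s x (Pi.single l 1) 0 * fderiv ℝ v x (Pi.single m 1) 1 - fderiv ℝ s x (Pi.single l 1) 1 * fderiv ℝ v x (Pi.single m 1) 0)) * hc3x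
      + (-1 : ℝ) * (s x 0 * (fderiv ℝ s x (Pi.single m 1) 1 * fderiv ℝ v x (Pi.single l 1) 2 - fderiv ℝ s x (Pi.single m 1) 2 * fderiv ℝ v x (Pi.single l 1) 1) - s x 1 * (fderiv ℝ s x (Pi.single m 1) 0 * fderiv ℝ v x (Pi.single l 1) 2 - fderiv ℝ s x (Pi.single m 1) 2 * fderiv ℝ v x (Pi.single l 1) 0) + s x 2 * (fderiv ℝ s x (Pi.single m 1) 0 * fderiv ℝ v x (Pi.single l 1) 1 - fderiv ℝ s x (Pi.single m 1) 1 * fderiv ℝ v x (Pi.single l 1) 0)) * hc3x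
      + (2 : ℝ) * (v x 0 * (fderiv ℝ v x (Pi.single l 1) 1 * fderiv ℝ v x (Pi.single m 1) 2 - fderiv ℝ v x (Pi.single l 1) 2 * fderiv ℝ v x (Pi.single m 1) 1) - v x 1 * (fderiv ℝ v x (Pi.single l 1) 0 * fderiv ℝ v x (Pi.single m 1) 2 - fderiv ℝ v x (Pi.single l 1) 2 * fderiv ℝ v x (Pi.single m 1) 0) + v x 2 * (fderiv ℝ v x (Pi.single l 1) 0 * fderiv ℝ v x (Pi.single m 1) 1 - fderiv ℝ v x (Pi.single l 1) 1 * fderiv ℝ v x (Pi.single m 1) 0)) * hc3x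
      + (-1/2 : ℝ) * (s x 0 * (v x 1 * fderiv ℝ v x (Pi.single m 1) 2 - v x 2 * fderiv ℝ v x (Pi.single m 1) 1) - s x 1 * (v x 0 * fderiv ℝ v x (Pi.single m 1) 2 - v x 2 * fderiv ℝ v x (Pi.single m 1) 0) + s x 2 * (v x 0 * fderiv ℝ v x (Pi.single m 1) 1 - v x 1 * fderiv ℝ v x (Pi.single m 1) 0)) * hc1l
      + (1/2 : ℝ) * (s x 0 * (v x 1 * fderiv ℝ v x (Pi.single l 1) 2 - v x 2 * fderiv ℝ v x (Pi.single l 1) 1) - s x 1 * (v x 0 * fderiv ℝ v x (Pi.single l 1) 2 - v x 2 * fderiv ℝ v x (Pi.single l 1) 0) + s x 2 * (v x 0 * fderiv ℝ v x (Pi.single l 1) 1 - v x 1 * fderiv ℝ v x (Pi.single l 1) 0)) * hc1m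
      + (-1 : ℝ) * (v x 0 * (s x 1 * fderiv ℝ v x (Pi.single m 1) 2 - s x 2 * fderiv ℝ v x (Pi.single m 1) 1) - v x 1 * (s x 0 * fderiv ℝ v x (Pi.single m 1) 2 - s x 2 * fderiv ℝ v x (Pi.single m 1) 0) + v x 2 * (s x 0 * fderiv ℝ v x (Pi.single m 1) 1 - s x 1 * fderiv ℝ v x (Pi.single m 1) 0)) * hc2l
      + (1 : ℝ) * (v x 0 * (s x 1 * fderiv ℝ v x (Pi.single l 1) 2 - s x 2 * fderiv ℝ v x (Pi.single l 1) 1) - v x 1 * (s x 0 * fderiv ℝ v x (Pi.single l 1) 2 - s x 2 * fderiv ℝ v x (Pi.single l 1) 0) + v x 2 * (s x 0 * fderiv ℝ v x (Pi.single l 1) 1 - s x 1 * fderiv ℝ v x (Pi.single l 1) 0)) * hc2m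
      + (1 : ℝ) * (s x 0 * (fderiv ℝ s x (Pi.single m 1) 1 * v x 2 - fderiv ℝ s x (Pi.single m 1) 2 * v x 1) - s x 1 * (fderiv ℝ s x (Pi.single m 1) 0 * v x 2 - fderiv ℝ s x (Pi.single m 1) 2 * v x 0) + s x 2 * (fderiv ℝ s x (Pi.single m 1) 0 * v x 1 - fderiv ℝ s x (Pi.single m 1) 1 * v x 0)) * hc3l
      + (-1 : ℝ) * (s x 0 * (fderiv ℝ s x (Pi.single l 1) 1 * v x 2 - fderiv ℝ s x (Pi.single l 1) 2 * v x 1) - s x 1 * (fderiv ℝ s x (Pi.single l 1) 0 * v x 2 - fderiv ℝ s x (Pi.single l 1) 2 * v x 0) + s x 2 * (fderiv ℝ s x (Pi.single l 1) 0 * v x 1 - fderiv ℝ s x (Pi.single l 1) 1 * v x 0)) * hc3m
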